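/- Let F_q be a prime field, m > 1 with m | (q−1), ψ a nontrivial additive character, T as above with nonvanishing values, and S(x) = x^(q−2)·T(x^((q−1)/m)). Then for a = 0 and b ∈ F_q^×, |W_S(ψ, 0, b)| ≤ (m−1)·q^(1/2) + 2. -/

import Mathlib

open scoped BigOperators


lemma aux_sum_split {q : ℕ} [Fact q.Prime] (h : ZMod q → ℂ) :
    ∑ x : ZMod q, h x = h 0 + ∑ u : (ZMod q)ˣ, h ↑u := by
  rw [← Finset.add_sum_erase _ _ (Finset.mem_univ 0)]
  congr 1
  refine Finset.sum_bij' (fun x hx => Units.mk0 x (Finset.mem_erase.mp hx).1)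
    (fun u _ => (u : ZMod q)) (fun x hx => Finset.mem_univ _)
    (fun u _ => Finset.mem_erase.mpr ⟨u.ne_zero, Finset.mem_univ _⟩)
    (fun x hx => rfl) (fun u _ => Units.ext rfl) (fun x hx => rfl)

lemma aux_abs_gaussSum {q : ℕ} [Fact q.Prime] {χ : MulChar (ZMod q) ℂ} (hχ : χ ≠ 1)
    {ψ : AddChar (ZMod q) ℂ} (hψ : ψ.IsPrimitive) :
    ‖gaussSum χ ψ‖ = Real.sqrt q := by
  have hq : 0 < ringChar (ZMod q) := by
    rw [ZMod.ringChar_zmod_n]; exact (Fact.out : q.Prime).pos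
  have hconj : (starRingEnd ℂ) (gaussSum χ ψ) = gaussSum χ⁻¹ ψ⁻¹ := by
    rw [gaussSum, gaussSum, map_sum]
    refine Finset.sum_congr rfl fun x _ => ?_
    rw [map_mul]
    rw [show (starRingEnd ℂ) (χ x) = star (χ x) from rfl, MulChar.star_apply',
      AddChar.starComp_apply hq]
  have h := gaussSum_mul_gaussSum_eq_card hχ hψ
  rw [← hconj, Complex.mul_conj, ZMod.card] at h
  have hnsq : Complex.normSq (gaussSum χ ψ) = (q : ℝ) := by exact_mod_cast h
  rw [Complex.norm_def, hnsq]

lemma aux_core {q m n : ℕ} [Fact q.Prime] (hm : 1 < m) (hn0 : 0 < n) (hmn : q - 1 = m * n)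
    {ψ : AddChar (ZMod q) ℂ} (hψ : ψ.IsPrimitive)
    {χ0 : MulChar (ZMod q) ℂ} (hord : orderOf χ0 = m)
    (hkey : ∀ w : (ZMod q)ˣ, χ0 ↑w = 1 ↔ w ^ n = 1)
    {s : ZMod q} (hs : s ≠ 0) :
    (m : ℝ) * ‖∑ k ∈ Finset.univ.filter (fun w : (ZMod q)ˣ => w ^ n = 1),
      ψ (s * ↑k)‖ ≤ 1 + ((m : ℝ) - 1) * Real.sqrt q := by
  set G : ℕ → ℂ := fun j => ∑ u : (ZMod q)ˣ, (χ0 ↑u) ^ j * ψ (s * ↑u) with hG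
  have hχm : χ0 ^ m = 1 := by rw [← hord]; exact pow_orderOf_eq_one χ0
  have hwm : ∀ u : (ZMod q)ˣ, (χ0 ↑u) ^ m = 1 := by
    intro u
    rw [← MulChar.pow_apply_coe, hχm, MulChar.one_apply_coe]
  have hind : ∀ u : (ZMod q)ˣ,
      ∑ j ∈ Finset.range m, (χ0 ↑u) ^ j = if u ^ n = 1 then (m : ℂ) else 0 := by
    intro u
    by_cases h1 : χ0 ↑u = 1
    · rw [if_pos ((hkey u).mp h1), h1]
      simp
    · rw [if_neg (fun hc => h1 ((hkey u).mpr hc)), geom_sum_eq h1, hwm, sub_self, zero_div]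
  -- the key identity
  have e1 : (m : ℂ) * ∑ k ∈ Finset.univ.filter (fun w : (ZMod q)ˣ => w ^ n = 1),
      ψ (s * ↑k) = ∑ j ∈ Finset.range m, G j := by
    rw [hG]
    rw [Finset.sum_comm]
    calc (m : ℂ) * ∑ k ∈ Finset.univ.filter (fun w : (ZMod q)ˣ => w ^ n = 1), ψ (s * ↑k)
        = ∑ k ∈ Finset.univ.filter (fun w : (ZMod q)ˣ => w ^ n = 1), (m : ℂ) * ψ (s * ↑k) := by
          rw [Finset.mul_sum]
      _ = ∑ u : (ZMod q)ˣ, (if u ^ n = 1 then (m : ℂ) else 0) * ψ (s * ↑u) := by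
          rw [Finset.sum_filter]
          refine Finset.sum_congr rfl fun u _ => ?_
          split_ifs <;> simp
      _ = ∑ u : (ZMod q)ˣ, ∑ j ∈ Finset.range m, (χ0 ↑u) ^ j * ψ (s * ↑u) := by
          refine Finset.sum_congr rfl fun u _ => ?_
          rw [← Finset.sum_mul, hind u]
  -- the j = 0 term
  have hG0 : G 0 = -1 := by
    have h0 : ∑ x : ZMod q, ψ (s * x) = 0 := by
      have h := AddChar.sum_mulShift s hψ
      rw [if_neg hs, Nat.cast_zero] at h
      rw [← h]
      exact Finset.sum_congr rfl fun x _ => by rw [mul_comm]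
    rw [aux_sum_split (fun x => ψ (s * x))] at h0
    simp only [mul_zero, AddChar.map_zero_eq_one] at h0
    rw [hG]
    simp only [pow_zero, one_mul]
    linear_combination h0
  -- the j ≠ 0 terms
  have hGj : ∀ j : ℕ, j ≠ 0 → j < m → ‖G j‖ = Real.sqrt q := by
    intro j hj0 hjm
    have hne : χ0 ^ j ≠ 1 := pow_ne_one_of_lt_orderOf hj0 (by rw [hord]; exact hjm)
    have hprim' : (AddChar.mulShift ψ s).IsPrimitive :=
      AddChar.IsPrimitive.of_ne_one (hψ hs)
    have hgs : G j = gaussSum (χ0 ^ j) (AddChar.mulShift ψ s) := by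
      rw [gaussSum, aux_sum_split (fun x => (χ0 ^ j) x * (AddChar.mulShift ψ s) x)]
      have hz : (χ0 ^ j) (0 : ZMod q) = 0 := MulChar.map_nonunit _ not_isUnit_zero
      rw [hz, zero_mul, zero_add, hG]
      refine (Finset.sum_congr rfl fun u _ => ?_).symm
      rw [MulChar.pow_apply_coe, AddChar.mulShift_apply]
    rw [hgs]
    exact aux_abs_gaussSum hne hprim'
  -- assemble
  have hmsplit : m - 1 + 1 = m := by omega
  have habs : (m : ℝ) * ‖∑ k ∈ Finset.univ.filter
      (fun w : (ZMod q)ˣ => w ^ n = 1), ψ (s * ↑k)‖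
      = ‖∑ j ∈ Finset.range m, G j‖ := by
    rw [← e1, norm_mul, Complex.norm_natCast]
  have hsum := Finset.sum_range_succ' G (m - 1)
  rw [hmsplit] at hsum
  rw [habs, hsum]
  have hterm : ∑ j ∈ Finset.range (m - 1), ‖G (j + 1)‖
      = ((m : ℝ) - 1) * Real.sqrt q := by
    rw [Finset.sum_congr rfl (fun j hj => hGj (j + 1) (by omega)
      (by have := Finset.mem_range.mp hj; omega))]
    rw [Finset.sum_const, Finset.card_range, nsmul_eq_mul, Nat.cast_sub (by omega), Nat.cast_one]
  calc ‖(∑ j ∈ Finset.range (m - 1), G (j + 1)) + G 0‖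
      ≤ ‖∑ j ∈ Finset.range (m - 1), G (j + 1)‖ + ‖G 0‖ :=
        norm_add_le _ _
    _ ≤ (∑ j ∈ Finset.range (m - 1), ‖G (j + 1)‖) + 1 := by
        rw [hG0, norm_neg, norm_one]
        exact add_le_add_left (norm_sum_le (E := ℂ) _ _) 1
    _ = 1 + ((m : ℝ) - 1) * Real.sqrt q := by rw [hterm]; ring


lemma aux_char {q m n : ℕ} [Fact q.Prime] (hm : 1 < m) (hn0 : 0 < n) (hmn : q - 1 = m * n) :
    ∃ χ0 : MulChar (ZMod q) ℂ,
      orderOf χ0 = m ∧ (∀ w : (ZMod q)ˣ, χ0 ↑w = 1 ↔ w ^ n = 1) ∧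
      (Finset.univ.filter (fun w : (ZMod q)ˣ => w ^ n = 1)).card = n := by
  have hm0 : 0 < m := by omega
  have hmdvd : m ∣ q - 1 := ⟨n, hmn⟩
  obtain ⟨χ0, hχ0⟩ : ∃ χ : MulChar (ZMod q) ℂ, orderOf χ = m :=
    MulChar.exists_mulChar_orderOf (ZMod q) (by rw [ZMod.card]; exact hmdvd)
      (Complex.isPrimitiveRoot_exp m (by omega))
  obtain ⟨g, hg⟩ := IsCyclic.exists_generator (α := (ZMod q)ˣ)
  have hog : orderOf g = q - 1 := by
    have h1 := orderOf_eq_card_of_forall_mem_zpowers hg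
    rwa [Nat.card_eq_fintype_card, ZMod.card_units] at h1
  have hmem : ∀ w : (ZMod q)ˣ, ∃ k : ℕ, g ^ k = w := fun w =>
    (Submonoid.mem_powers_iff _ _).mp (mem_powers_iff_mem_zpowers.mpr (hg w))
  set z : ℂ := χ0 ↑g with hz
  have hzj : ∀ j : ℕ, (χ0 ^ j = 1 ↔ z ^ j = 1) := by
    intro j
    constructor
    · intro h1
      rw [hz, ← MulChar.pow_apply_coe, h1, MulChar.one_apply_coe]
    · intro h1
      refine MulChar.ext fun a => ?_
      obtain ⟨k, hk⟩ := hmem a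
      rw [MulChar.one_apply_coe, MulChar.pow_apply_coe, ← hk, Units.val_pow_eq_pow_val,
        map_pow, ← hz, ← pow_mul, mul_comm, pow_mul, h1, one_pow]
  have hzord : orderOf z = m := by
    rw [← hχ0]
    exact orderOf_eq_orderOf_iff.mpr fun j => (hzj j).symm
  have hdvd_iff : ∀ k : ℕ, ((g ^ k) ^ n = 1 ↔ m ∣ k) := by
    intro k
    rw [← pow_mul, ← orderOf_dvd_iff_pow_eq_one, hog, hmn,
      Nat.mul_dvd_mul_iff_right hn0]
  have key : ∀ w : (ZMod q)ˣ, χ0 ↑w = 1 ↔ w ^ n = 1 := by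
    intro w
    obtain ⟨k, hk⟩ := hmem w
    have hval : χ0 ↑w = z ^ k := by
      rw [← hk, Units.val_pow_eq_pow_val, map_pow]
    rw [hval, ← hk, hdvd_iff k, ← orderOf_dvd_iff_pow_eq_one, hzord]
  refine ⟨χ0, hχ0, key, ?_⟩
  classical
  have hpred : ∀ w : (ZMod q)ˣ, (w ^ n = 1) ↔ w ∈ Subgroup.zpowers (g ^ m) := by
    intro w
    rw [← mem_powers_iff_mem_zpowers, Submonoid.mem_powers_iff]
    constructor
    · intro hw
      obtain ⟨k, hk⟩ := hmem w
      rw [← hk] at hw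
      obtain ⟨k', hk'⟩ := (hdvd_iff k).mp hw
      exact ⟨k', by rw [← pow_mul, ← hk', hk]⟩
    · rintro ⟨k', rfl⟩
      rw [show ((g ^ m) ^ k') ^ n = (g ^ (m * k')) ^ n by rw [pow_mul]]
      exact (hdvd_iff (m * k')).mpr ⟨k', rfl⟩
  rw [Finset.filter_congr (fun w _ => hpred w), ← Fintype.card_subtype,
    ← Nat.card_eq_fintype_card]
  have hc : Nat.card (Subgroup.zpowers (g ^ m)) = orderOf (g ^ m) := Nat.card_zpowers (g ^ m)
  rw [hc, orderOf_pow_of_dvd (by omega) (by rw [hog, hmn]; exact ⟨n, rfl⟩), hog, hmn,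
    Nat.mul_div_cancel_left n hm0]

theorem stmt10 (q : ℕ) [Fact q.Prime] (m : ℕ) (hm : 1 < m) (hmdvd : m ∣ q - 1)
    (ψ : AddChar (ZMod q) ℂ) (hψ : ψ ≠ 1)
    (T : ZMod q → ZMod q) (hT : ∀ x : ZMod q, x ≠ 0 → T (x ^ ((q - 1) / m)) ≠ 0)
    (S : ZMod q → ZMod q) (hS : ∀ x, S x = x ^ (q - 2) * T (x ^ ((q - 1) / m)))
    (b : ZMod q) (hb : b ≠ 0) :
    ‖∑ x : ZMod q, ψ (0 * x + b * S x)‖ ≤ ((m : ℝ) - 1) * Real.sqrt q + 2 := by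
  have hq : q.Prime := Fact.out
  have hq1 : 1 ≤ q - 1 := by have := hq.two_le; omega
  have hmq : m ≤ q - 1 := Nat.le_of_dvd (by omega) hmdvd
  have hq3 : 3 ≤ q := by omega
  set n : ℕ := (q - 1) / m with hn
  have hmn : q - 1 = m * n := (Nat.mul_div_cancel' hmdvd).symm
  have hn0 : 0 < n := by
    rw [hn]; exact Nat.div_pos hmq (by omega)
  have hprim : ψ.IsPrimitive := AddChar.IsPrimitive.of_ne_one hψ
  obtain ⟨χ0, hord, hkey, hKcard⟩ := aux_char hm hn0 hmn
  set K : Finset (ZMod q)ˣ := Finset.univ.filter (fun w : (ZMod q)ˣ => w ^ n = 1) with hK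
  set f : (ZMod q)ˣ → ℂ :=
    fun u => ψ (b * (((u : ZMod q))⁻¹ * T ((u : ZMod q) ^ n))) with hf
  set sv : (ZMod q)ˣ → ZMod q :=
    fun u => b * (((u : ZMod q))⁻¹ * T ((u : ZMod q) ^ n)) with hsv
  have hsv0 : ∀ u : (ZMod q)ˣ, sv u ≠ 0 := by
    intro u
    have h1 : ((u : ZMod q))⁻¹ ≠ 0 := inv_ne_zero u.ne_zero
    have h2 : T ((u : ZMod q) ^ n) ≠ 0 := hT _ u.ne_zero
    exact mul_ne_zero hb (mul_ne_zero h1 h2)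
  -- Step A : split off x = 0
  have hA : ∑ x : ZMod q, ψ (0 * x + b * S x) = 1 + ∑ u : (ZMod q)ˣ, f u := by
    rw [aux_sum_split (fun x => ψ (0 * x + b * S x))]
    congr 1
    · rw [hS 0, zero_pow (by omega : q - 2 ≠ 0)]
      simp
    · refine Finset.sum_congr rfl fun u _ => ?_
      have hx : (u : ZMod q) ≠ 0 := u.ne_zero
      have hinv : (u : ZMod q) ^ (q - 2) = ((u : ZMod q))⁻¹ := by
        have h1 : (u : ZMod q) * (u : ZMod q) ^ (q - 2) = 1 := by
          rw [← pow_succ', show q - 2 + 1 = q - 1 by omega]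
          exact ZMod.pow_card_sub_one_eq_one hx
        exact eq_inv_of_mul_eq_one_left (by rw [mul_comm] at h1; exact h1)
      rw [hS, zero_mul, zero_add, hinv, hf]
  -- Step B : averaging over K
  have havg : ∑ u : (ZMod q)ˣ, ∑ k ∈ K, f (u * k) = (n : ℂ) * ∑ u : (ZMod q)ˣ, f u := by
    rw [Finset.sum_comm]
    rw [Finset.sum_congr rfl (fun k (_ : k ∈ K) =>
      (Fintype.sum_equiv (Equiv.mulRight k) (fun u => f (u * k)) f (fun u => rfl)))]
    rw [Finset.sum_const, hKcard, nsmul_eq_mul]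
  -- Step C : inner sums
  have hinner : ∀ u : (ZMod q)ˣ, ∑ k ∈ K, f (u * k) = ∑ k ∈ K, ψ (sv u * ↑k) := by
    intro u
    have hfk : ∀ k ∈ K, f (u * k) = ψ (sv u * (↑(k⁻¹) : ZMod q)) := by
      intro k hk
      have hkn : (k : ZMod q) ^ n = 1 := by
        have h1 := (Finset.mem_filter.mp hk).2
        rw [← Units.val_pow_eq_pow_val, h1, Units.val_one]
      simp only [hf, hsv, Units.val_mul, Units.val_inv_eq_inv_val]
      rw [mul_pow, hkn, mul_one, mul_inv]
      congr 1
      ring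
    rw [Finset.sum_congr rfl hfk]
    refine Finset.sum_bij' (fun k _ => k⁻¹) (fun k _ => k⁻¹) ?_ ?_ ?_ ?_ ?_
    · intro k hk
      have h1 := (Finset.mem_filter.mp hk).2
      exact Finset.mem_filter.mpr ⟨Finset.mem_univ _, by rw [inv_pow, h1, inv_one]⟩
    · intro k hk
      have h1 := (Finset.mem_filter.mp hk).2
      exact Finset.mem_filter.mpr ⟨Finset.mem_univ _, by rw [inv_pow, h1, inv_one]⟩
    · intro k _; exact inv_inv k
    · intro k _; exact inv_inv k
    · intro k _; rfl
  -- Step D : put it together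
  set D : ℝ := 1 + ((m : ℝ) - 1) * Real.sqrt q with hD
  have hper : ∀ u : (ZMod q)ˣ, (m : ℝ) * ‖∑ k ∈ K, f (u * k)‖ ≤ D := by
    intro u
    rw [hinner u]
    exact aux_core hm hn0 hmn hprim hord hkey (hsv0 u)
  have hDpos : 0 ≤ D := by
    have h1 : (0:ℝ) ≤ Real.sqrt q := Real.sqrt_nonneg q
    have h2 : (1:ℝ) ≤ (m:ℝ) := by exact_mod_cast hm.le
    nlinarith
  have h2 : ((m : ℝ) * n) * ‖∑ u : (ZMod q)ˣ, f u‖ ≤ ((m : ℝ) * n) * D := by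
    have e2 : (n : ℝ) * ‖∑ u : (ZMod q)ˣ, f u‖
        = ‖∑ u : (ZMod q)ˣ, ∑ k ∈ K, f (u * k)‖ := by
      rw [havg, norm_mul, Complex.norm_natCast]
    calc ((m : ℝ) * n) * ‖∑ u : (ZMod q)ˣ, f u‖
        = (m : ℝ) * ((n : ℝ) * ‖∑ u : (ZMod q)ˣ, f u‖) := by ring
      _ = (m : ℝ) * ‖∑ u : (ZMod q)ˣ, ∑ k ∈ K, f (u * k)‖ := by rw [e2]
      _ ≤ (m : ℝ) * ∑ u : (ZMod q)ˣ, ‖∑ k ∈ K, f (u * k)‖ := by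
          exact mul_le_mul_of_nonneg_left (norm_sum_le _ _) (by positivity)
      _ = ∑ u : (ZMod q)ˣ, (m : ℝ) * ‖∑ k ∈ K, f (u * k)‖ := by
          rw [Finset.mul_sum]
      _ ≤ ∑ _u : (ZMod q)ˣ, D := Finset.sum_le_sum (fun u _ => hper u)
      _ = (Fintype.card (ZMod q)ˣ : ℝ) * D := by
          rw [Finset.sum_const, Finset.card_univ, nsmul_eq_mul]
      _ = ((m : ℝ) * n) * D := by
          rw [ZMod.card_units, hmn]; push_cast; ring
  have h3 : ‖∑ u : (ZMod q)ˣ, f u‖ ≤ D := by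
    have hpos : (0:ℝ) < (m : ℝ) * n := by positivity
    exact le_of_mul_le_mul_left h2 hpos
  rw [hA]
  calc ‖1 + ∑ u : (ZMod q)ˣ, f u‖
      ≤ ‖(1:ℂ)‖ + ‖∑ u : (ZMod q)ˣ, f u‖ := norm_add_le _ _
    _ ≤ 1 + D := by rw [norm_one]; linarith
    _ = ((m : ℝ) - 1) * Real.sqrt q + 2 := by rw [hD]; ring
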